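/- Let d be a prime, let P : (ZMod d)² → ℝ satisfy P(a,b) ≥ 0 for all (a,b), and let Y₁, Y₂ be unitary d×d complex matrices. Then: (1) for every (k,l) ∈ (ZMod d)², Σ_{(a,b) ∈ (ZMod d)²} P(a,b) · | d^{−1} Tr( W_{k,l}† · Y₁† · W_{a,b} · Y₂ ) |² ≤ max_{(a,b) ∈ (ZMod d)²} P(a,b); and (2) the bound is attained by the identity (canonic) choice: for every (a₀,b₀) ∈ (ZMod d)², Σ_{(a,b) ∈ (ZMod d)²} P(a,b) · | d^{−1} Tr( W_{a₀,b₀}† · W_{a,b} ) |² = P(a₀,b₀). -/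

import Mathlib

open Matrix Complex

noncomputable section

/-- ω = exp(2πi/d). -/
def omga (d : ℕ) : ℂ := Complex.exp (2 * Real.pi * Complex.I / d)

/-- The Weyl operator W_{k,l}: (j,j') entry is ω^{jk} if j' = j + l, else 0. -/
def weyl (d : ℕ) (k l : ZMod d) : Matrix (ZMod d) (ZMod d) ℂ :=
  Matrix.of fun j j' => if j' = j + l then omga d ^ (j * k).val else 0

section Helpers

variable (d : ℕ) [NeZero d]

lemma omga_pow_d : omga d ^ d = 1 := by
  rw [omga, ← Complex.exp_nat_mul]
  have hd : (d:ℂ) ≠ 0 := Nat.cast_ne_zero.mpr (NeZero.ne d)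
  rw [mul_div_cancel₀ _ hd, Complex.exp_two_pi_mul_I]

lemma omga_add (m n : ZMod d) : omga d ^ (m + n).val = omga d ^ m.val * omga d ^ n.val := by
  rw [ZMod.val_add, ← pow_add]
  exact (pow_eq_pow_mod _ (omga_pow_d d)).symm

lemma omga_mul_neg (m : ZMod d) : omga d ^ m.val * omga d ^ (-m).val = 1 := by
  rw [← omga_add, add_neg_cancel, ZMod.val_zero, pow_zero]

lemma omga_conj (m : ZMod d) : (starRingEnd ℂ) (omga d ^ m.val) = omga d ^ (-m).val := by
  have habs : ‖omga d ^ m.val‖ = 1 := by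
    rw [norm_pow, omga, Complex.norm_exp]
    have : (2 * Real.pi * Complex.I / d).re = 0 := by
      simp [Complex.div_re]
    rw [this, Real.exp_zero, one_pow]
  rw [← Complex.inv_eq_conj habs]
  exact (eq_inv_of_mul_eq_one_left (by rw [mul_comm]; exact omga_mul_neg d m)).symm

lemma omga_ne_one (hd : 1 < d) : omga d ≠ 1 := by
  rw [omga, Ne, Complex.exp_eq_one_iff]
  push_neg
  intro n h
  have hd0 : (d:ℂ) ≠ 0 := Nat.cast_ne_zero.mpr (NeZero.ne d)
  have hpi : (2 * Real.pi * Complex.I) ≠ 0 := by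
    simp [Real.pi_ne_zero, Complex.I_ne_zero, two_ne_zero]
  rw [div_eq_iff hd0] at h
  have h1 : (2 * Real.pi * Complex.I) * 1 = (2 * Real.pi * Complex.I) * (n * d) := by
    ring_nf; ring_nf at h; linear_combination h
  have h2 : (1:ℂ) = n * d := mul_left_cancel₀ hpi h1
  have h3 : (1:ℤ) = n * d := by exact_mod_cast h2
  have h4 : (d:ℤ) ∣ 1 := Dvd.intro_left n h3.symm
  have h5 := Int.le_of_dvd one_pos h4
  omega

lemma sum_omga_val (hd : 1 < d) : ∑ m : ZMod d, omga d ^ m.val = 0 := by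
  have : ∑ m : ZMod d, omga d ^ m.val = ∑ i ∈ Finset.range d, omga d ^ i := by
    refine Finset.sum_nbij' (i := fun (m : ZMod d) => m.val) (j := fun i => (i : ZMod d)) ?_ ?_ ?_ ?_ ?_
    · intro m _; exact Finset.mem_range.mpr (ZMod.val_lt m)
    · intro i _; exact Finset.mem_univ _
    · intro m _; exact ZMod.natCast_zmod_val m
    · intro i hi; exact ZMod.val_cast_of_lt (Finset.mem_range.mp hi)
    · intro m _; rfl
  rw [this, geom_sum_eq (omga_ne_one d hd), omga_pow_d, sub_self, zero_div]

lemma sum_omga (hd : d.Prime) (j : ZMod d) :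
    ∑ a : ZMod d, omga d ^ (j * a).val = if j = 0 then (d : ℂ) else 0 := by
  split_ifs with hj
  · subst hj; simp [ZMod.val_zero]
  · haveI : Fact d.Prime := ⟨hd⟩
    have : ∑ a : ZMod d, omga d ^ (j * a).val = ∑ m : ZMod d, omga d ^ m.val :=
      Fintype.sum_equiv (Equiv.mulLeft₀ j hj) _ _ (fun a => rfl)
    rw [this, sum_omga_val d hd.one_lt]


lemma omga_star (m : ZMod d) : star (omga d ^ m.val) = omga d ^ (-m).val :=
  omga_conj d m

lemma trace_weyl_mul (a b : ZMod d) (X : Matrix (ZMod d) (ZMod d) ℂ) :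
    (weyl d a b * X).trace = ∑ j : ZMod d, omga d ^ (j * a).val * X (j + b) j := by
  rw [Matrix.trace]
  simp only [Matrix.diag_apply, Matrix.mul_apply, weyl, Matrix.of_apply]
  refine Finset.sum_congr rfl fun j _ => ?_
  rw [Finset.sum_eq_single (j + b)]
  · rw [if_pos rfl]
  · intro m _ hm; rw [if_neg hm, zero_mul]
  · intro h; exact absurd (Finset.mem_univ _) h

lemma trace_weylH_mul (k l : ZMod d) (M : Matrix (ZMod d) (ZMod d) ℂ) :
    ((weyl d k l)ᴴ * M).trace = ∑ m : ZMod d, omga d ^ (-(m * k)).val * M m (m + l) := by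
  rw [Matrix.trace]
  simp only [Matrix.diag_apply, Matrix.mul_apply, Matrix.conjTranspose_apply, weyl,
    Matrix.of_apply]
  rw [Finset.sum_comm]
  refine Finset.sum_congr rfl fun m _ => ?_
  rw [Finset.sum_eq_single (m + l)]
  · rw [if_pos rfl, ← omga_star]
  · intro j _ hj; rw [if_neg hj, star_zero, zero_mul]
  · intro h; exact absurd (Finset.mem_univ _) h

lemma weyl_unitary (k l : ZMod d) : weyl d k l ∈ Matrix.unitaryGroup (ZMod d) ℂ := by
  rw [Matrix.mem_unitaryGroup_iff]
  ext j j'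
  simp only [Matrix.mul_apply, Matrix.star_apply, weyl, Matrix.of_apply, Matrix.one_apply]
  rw [Finset.sum_eq_single (j + l)]
  · rw [if_pos rfl]
    by_cases h : j = j'
    · subst h
      rw [if_pos rfl, if_pos rfl, omga_star, omga_mul_neg]
    · have hne : ¬ (j + l = j' + l) := fun hc => h (add_right_cancel hc)
      rw [if_neg hne, star_zero, mul_zero, if_neg h]
  · intro m _ hm; rw [if_neg hm, zero_mul]
  · intro h; exact absurd (Finset.mem_univ _) h

lemma trace_weylH_weyl (hd : d.Prime) (k l a b : ZMod d) :
    ((weyl d k l)ᴴ * weyl d a b).trace = if a = k ∧ b = l then (d : ℂ) else 0 := by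
  rw [trace_weylH_mul]
  simp only [weyl, Matrix.of_apply]
  by_cases hb : b = l
  · subst hb
    have h1 : ∀ m : ZMod d,
        omga d ^ (-(m * k)).val * (if m + b = m + b then omga d ^ (m * a).val else 0)
        = omga d ^ ((a - k) * m).val := by
      intro m
      rw [if_pos rfl, ← omga_add]
      congr 1; ring
    rw [Finset.sum_congr rfl fun m _ => h1 m, sum_omga d hd (a - k)]
    by_cases ha : a = k
    · simp [ha, sub_eq_zero]
    · rw [if_neg (fun hc => ha (sub_eq_zero.mp hc)), if_neg (fun hc => ha hc.1)]
  · have h1 : ∀ m : ZMod d,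
        omga d ^ (-(m * k)).val * (if m + l = m + b then omga d ^ (m * a).val else 0) = 0 := by
      intro m
      rw [if_neg (fun hc => hb (add_left_cancel hc).symm), mul_zero]
    rw [Finset.sum_congr rfl fun m _ => h1 m, Finset.sum_const, smul_zero,
      if_neg (fun hc => hb hc.2)]

lemma parseval_row (hd : d.Prime) (b : ZMod d) (X : Matrix (ZMod d) (ZMod d) ℂ) :
    ∑ a : ZMod d, (weyl d a b * X).trace * star ((weyl d a b * X).trace)
      = d * ∑ j : ZMod d, X (j + b) j * star (X (j + b) j) := by
  simp only [trace_weyl_mul]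
  have key : ∀ a : ZMod d,
      (∑ j : ZMod d, omga d ^ (j * a).val * X (j + b) j)
        * star (∑ j' : ZMod d, omga d ^ (j' * a).val * X (j' + b) j')
      = ∑ j : ZMod d, ∑ j' : ZMod d,
          omga d ^ ((j - j') * a).val * (X (j + b) j * star (X (j' + b) j')) := by
    intro a
    rw [star_sum, Finset.sum_mul_sum]
    refine Finset.sum_congr rfl fun j _ => Finset.sum_congr rfl fun j' _ => ?_
    rw [star_mul', omga_star]
    have h2 : omga d ^ (j * a).val * omga d ^ (-(j' * a)).val = omga d ^ ((j - j') * a).val := by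
      rw [← omga_add]; congr 1; ring
    calc omga d ^ (j * a).val * X (j + b) j
          * (omga d ^ (-(j' * a)).val * star (X (j' + b) j'))
        = (omga d ^ (j * a).val * omga d ^ (-(j' * a)).val)
            * (X (j + b) j * star (X (j' + b) j')) := by ring
      _ = omga d ^ ((j - j') * a).val * (X (j + b) j * star (X (j' + b) j')) := by rw [h2]
  rw [Finset.sum_congr rfl fun a _ => key a, Finset.sum_comm]
  have swap2 : ∀ j : ZMod d,
      ∑ a : ZMod d, ∑ j' : ZMod d,
          omga d ^ ((j - j') * a).val * (X (j + b) j * star (X (j' + b) j'))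
      = ∑ j' : ZMod d, (if j - j' = 0 then (d : ℂ) else 0)
          * (X (j + b) j * star (X (j' + b) j')) := by
    intro j
    rw [Finset.sum_comm]
    refine Finset.sum_congr rfl fun j' _ => ?_
    rw [← Finset.sum_mul, sum_omga d hd (j - j')]
  rw [Finset.sum_congr rfl fun j _ => swap2 j]
  rw [Finset.mul_sum]
  refine Finset.sum_congr rfl fun j _ => ?_
  have h3 : ∀ j' : ZMod d,
      (if j - j' = 0 then (d : ℂ) else 0) * (X (j + b) j * star (X (j' + b) j'))
      = if j' = j then (d : ℂ) * (X (j + b) j * star (X (j' + b) j')) else 0 := by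
    intro j'
    by_cases h : j' = j
    · subst h; rw [if_pos (sub_self j'), if_pos rfl]
    · rw [if_neg (fun hc => h (sub_eq_zero.mp hc).symm), if_neg h, zero_mul]
  rw [Finset.sum_congr rfl fun j' _ => h3 j', Finset.sum_ite_eq' Finset.univ j
    (fun j' => (d : ℂ) * (X (j + b) j * star (X (j' + b) j'))), if_pos (Finset.mem_univ j)]

lemma norm_sq_eq_re (z : ℂ) : (‖z‖ : ℝ) ^ 2 = (z * star z).re := by
  rw [Complex.star_def, Complex.mul_conj, Complex.sq_norm]
  simp

lemma parseval (hd : d.Prime) (X : Matrix (ZMod d) (ZMod d) ℂ) :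
    ∑ ab : ZMod d × ZMod d, ‖(weyl d ab.1 ab.2 * X).trace‖ ^ 2
      = d * ∑ p : ZMod d × ZMod d, ‖X p.1 p.2‖ ^ 2 := by
  rw [Fintype.sum_prod_type]
  have h1 : ∀ a : ZMod d, ∑ b : ZMod d, ‖(weyl d a b * X).trace‖ ^ 2
      = ∑ b : ZMod d, ((weyl d a b * X).trace * star ((weyl d a b * X).trace)).re :=
    fun a => Finset.sum_congr rfl fun b _ => norm_sq_eq_re _
  rw [Finset.sum_congr rfl fun a _ => h1 a, Finset.sum_comm]
  have h2 : ∀ b : ZMod d,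
      ∑ a : ZMod d, ((weyl d a b * X).trace * star ((weyl d a b * X).trace)).re
      = d * ∑ j : ZMod d, ‖X (j + b) j‖ ^ 2 := by
    intro b
    rw [← Complex.re_sum, parseval_row d hd b X]
    rw [show ((d : ℂ) * ∑ j : ZMod d, X (j + b) j * star (X (j + b) j)).re
        = d * (∑ j : ZMod d, X (j + b) j * star (X (j + b) j)).re by
      rw [Complex.mul_re]; simp [Complex.natCast_re, Complex.natCast_im]]
    rw [Complex.re_sum]
    congr 1
    exact Finset.sum_congr rfl fun j _ => (norm_sq_eq_re _).symm
  rw [Finset.sum_congr rfl fun b _ => h2 b, ← Finset.mul_sum]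
  congr 1
  rw [Finset.sum_comm]
  have hj : ∀ j : ZMod d, ∑ b : ZMod d, ‖X (j + b) j‖ ^ 2 = ∑ m : ZMod d, ‖X m j‖ ^ 2 :=
    fun j => Fintype.sum_equiv (Equiv.addLeft j) _ _ (fun b => rfl)
  rw [Finset.sum_congr rfl fun j _ => hj j, Fintype.sum_prod_type, Finset.sum_comm]

lemma unitary_entry_sum (hd : d.Prime) (X : Matrix (ZMod d) (ZMod d) ℂ)
    (hX : X ∈ Matrix.unitaryGroup (ZMod d) ℂ) :
    ∑ p : ZMod d × ZMod d, ‖X p.1 p.2‖ ^ 2 = d := by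
  have h : X * Xᴴ = 1 := by
    have := Matrix.mem_unitaryGroup_iff.mp hX
    rwa [Matrix.star_eq_conjTranspose] at this
  have htr := congrArg Matrix.trace h
  rw [Matrix.trace_one] at htr
  have hcard : (Fintype.card (ZMod d) : ℂ) = (d : ℂ) := by rw [ZMod.card]
  rw [hcard] at htr
  have htr2 : ∑ j : ZMod d, ∑ m : ZMod d, X j m * star (X j m) = (d : ℂ) := by
    rw [← htr, Matrix.trace]
    simp only [Matrix.diag_apply, Matrix.mul_apply, Matrix.conjTranspose_apply]
  have := congrArg Complex.re htr2
  rw [Complex.re_sum] at this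
  simp only [Complex.re_sum] at this
  rw [Fintype.sum_prod_type]
  calc ∑ j : ZMod d, ∑ m : ZMod d, ‖X j m‖ ^ 2
      = ∑ j : ZMod d, ∑ m : ZMod d, (X j m * star (X j m)).re :=
        Finset.sum_congr rfl fun j _ => Finset.sum_congr rfl fun m _ => norm_sq_eq_re _
    _ = (d : ℝ) := by rw [this]; simp

end Helpers

/-- (1) for any nonnegative weights P and unitaries Y₁, Y₂, the weighted sum of
squared coefficients is bounded by the maximal weight; (2) the bound is attained by the
identity (canonic) choice. -/
theorem weighted_coefficients_max
    (d : ℕ) [NeZero d] (hd : d.Prime)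
    (P : ZMod d × ZMod d → ℝ) (hP : ∀ ab, 0 ≤ P ab)
    (Y₁ Y₂ : Matrix (ZMod d) (ZMod d) ℂ)
    (hY₁ : Y₁ ∈ Matrix.unitaryGroup (ZMod d) ℂ)
    (hY₂ : Y₂ ∈ Matrix.unitaryGroup (ZMod d) ℂ) :
    (∀ k l : ZMod d,
      ∑ ab : ZMod d × ZMod d,
        P ab * ‖(1 / (d : ℂ)) * ((weyl d k l)ᴴ * Y₁ᴴ * weyl d ab.1 ab.2 * Y₂).trace‖ ^ 2 ≤
      Finset.univ.sup' Finset.univ_nonempty P) ∧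
    (∀ a₀ b₀ : ZMod d,
      ∑ ab : ZMod d × ZMod d,
        P ab * ‖(1 / (d : ℂ)) * ((weyl d a₀ b₀)ᴴ * weyl d ab.1 ab.2).trace‖ ^ 2 =
      P (a₀, b₀)) := by
  have hd0 : (d : ℝ) ≠ 0 := Nat.cast_ne_zero.mpr (NeZero.ne d)
  have hnorm : ∀ z : ℂ, ‖(1 / (d : ℂ)) * z‖ ^ 2 = (1 / (d : ℝ) ^ 2) * ‖z‖ ^ 2 := by
    intro z
    rw [norm_mul, mul_pow]
    congr 1
    rw [norm_div, norm_one]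
    simp [div_pow]
  constructor
  · intro k l
    set X := Y₂ * (weyl d k l)ᴴ * Y₁ᴴ with hXdef
    have hX : X ∈ Matrix.unitaryGroup (ZMod d) ℂ := by
      refine mul_mem (mul_mem hY₂ ?_) ?_
      · rw [← Matrix.star_eq_conjTranspose]; exact Unitary.star_mem (weyl_unitary d k l)
      · rw [← Matrix.star_eq_conjTranspose]; exact Unitary.star_mem hY₁
    have htr : ∀ ab : ZMod d × ZMod d,
        ((weyl d k l)ᴴ * Y₁ᴴ * weyl d ab.1 ab.2 * Y₂).trace
        = (weyl d ab.1 ab.2 * X).trace := by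
      intro ab
      rw [Matrix.trace_mul_comm, ← Matrix.mul_assoc, ← Matrix.mul_assoc,
        Matrix.trace_mul_comm]
    have hsum1 : ∑ ab : ZMod d × ZMod d,
        ‖(1 / (d : ℂ)) * ((weyl d k l)ᴴ * Y₁ᴴ * weyl d ab.1 ab.2 * Y₂).trace‖ ^ 2 = 1 := by
      calc ∑ ab : ZMod d × ZMod d,
          ‖(1 / (d : ℂ)) * ((weyl d k l)ᴴ * Y₁ᴴ * weyl d ab.1 ab.2 * Y₂).trace‖ ^ 2
          = ∑ ab : ZMod d × ZMod d, (1 / (d : ℝ) ^ 2) * ‖(weyl d ab.1 ab.2 * X).trace‖ ^ 2 :=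
            Finset.sum_congr rfl fun ab _ => by rw [htr ab, hnorm]
        _ = (1 / (d : ℝ) ^ 2) * ∑ ab : ZMod d × ZMod d, ‖(weyl d ab.1 ab.2 * X).trace‖ ^ 2 :=
            (Finset.mul_sum _ _ _).symm
        _ = (1 / (d : ℝ) ^ 2) * ((d : ℝ) * ∑ p : ZMod d × ZMod d, ‖X p.1 p.2‖ ^ 2) := by
            rw [parseval d hd X]
        _ = (1 / (d : ℝ) ^ 2) * ((d : ℝ) * (d : ℝ)) := by rw [unitary_entry_sum d hd X hX]
        _ = 1 := by field_simp [sq]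
    calc ∑ ab : ZMod d × ZMod d,
        P ab * ‖(1 / (d : ℂ)) * ((weyl d k l)ᴴ * Y₁ᴴ * weyl d ab.1 ab.2 * Y₂).trace‖ ^ 2
        ≤ ∑ ab : ZMod d × ZMod d,
          (Finset.univ.sup' Finset.univ_nonempty P)
            * ‖(1 / (d : ℂ)) * ((weyl d k l)ᴴ * Y₁ᴴ * weyl d ab.1 ab.2 * Y₂).trace‖ ^ 2 :=
          Finset.sum_le_sum fun ab _ => mul_le_mul_of_nonneg_right
            (Finset.le_sup' P (Finset.mem_univ ab)) (sq_nonneg _)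
      _ = (Finset.univ.sup' Finset.univ_nonempty P)
            * ∑ ab : ZMod d × ZMod d,
              ‖(1 / (d : ℂ)) * ((weyl d k l)ᴴ * Y₁ᴴ * weyl d ab.1 ab.2 * Y₂).trace‖ ^ 2 :=
          (Finset.mul_sum _ _ _).symm
      _ = Finset.univ.sup' Finset.univ_nonempty P := by rw [hsum1, mul_one]
  · intro a₀ b₀
    have hterm : ∀ ab : ZMod d × ZMod d,
        P ab * ‖(1 / (d : ℂ)) * ((weyl d a₀ b₀)ᴴ * weyl d ab.1 ab.2).trace‖ ^ 2
        = if ab = (a₀, b₀) then P ab else 0 := by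
      intro ab
      rw [trace_weylH_weyl d hd a₀ b₀ ab.1 ab.2]
      by_cases h : ab = (a₀, b₀)
      · have h1 : ab.1 = a₀ ∧ ab.2 = b₀ := by rw [h]; exact ⟨rfl, rfl⟩
        rw [if_pos h1, if_pos h]
        have : ‖(1 / (d : ℂ)) * (d : ℂ)‖ ^ 2 = 1 := by
          rw [one_div, inv_mul_cancel₀ (Nat.cast_ne_zero.mpr (NeZero.ne d)), norm_one, one_pow]
        rw [this, mul_one]
      · have h1 : ¬ (ab.1 = a₀ ∧ ab.2 = b₀) := by
          intro hc; exact h (Prod.ext hc.1 hc.2)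
        rw [if_neg h1, if_neg h, mul_zero, norm_zero]
        ring
    rw [Finset.sum_congr rfl fun ab _ => hterm ab,
      Finset.sum_ite_eq' Finset.univ (a₀, b₀) P, if_pos (Finset.mem_univ _)]

end
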